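/- The composition product is compatible with the mixed composition product: for all noncommutative formal power series e, c over X = {x0, x1} and every pair d = (d1, d2) of formal power series, e ∘ (c ∘̃ d) = (e ∘ c) ∘̃ d, where ∘ is the composition product and ∘̃ is the mixed composition product. -/

import Mathlib

/-- Words over the alphabet X = {x₀, x₁}, encoded as lists of booleans
(`false` ↔ x₀, `true` ↔ x₁). -/
abbrev Word : Type := List Bool

/-- Noncommutative formal power series over X with real coefficients. -/
abbrev Series : Type := Word → ℝ

/-- Auxiliary recursion computing the coefficient of the shuffle product. -/
def sh : Word → Series → Series → ℝ
  | [], c, d => c [] * d []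
  | a :: w, c, d => sh w (fun u => c (a :: u)) d + sh w c (fun u => d (a :: u))

/-- The shuffle product of two series. -/
def shuffle (c d : Series) : Series := fun w => sh w c d

/-- Left concatenation by the letter x₀. -/
def X0f (c : Series) : Series := fun w =>
  match w with
  | false :: w' => c w'
  | _ => 0

/-- Left concatenation by the letter x₁. -/
def X1f (c : Series) : Series := fun w =>
  match w with
  | true :: w' => c w'
  | _ => 0

/-- The indicator series of a word. -/
def deltaW (η : Word) : Series := fun w => if w = η then 1 else 0

/-- The shuffle unit 1∅. -/
def oneS : Series := deltaW []

/-- Mixed composition product of a word with a pair of series: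
∅ ∘̃ z = ∅, (x₀η) ∘̃ z = x₀(η ∘̃ z),
(x₁η) ∘̃ z = x₁(z₁ ⧢ (η ∘̃ z)) + x₀(z₂ ⧢ (η ∘̃ z)). -/
def wmix : Word → Series × Series → Series
  | [], _ => oneS
  | false :: η, z => X0f (wmix η z)
  | true :: η, z => X1f (shuffle z.1 (wmix η z)) + X0f (shuffle z.2 (wmix η z))

/-- Mixed composition product `c ∘̃ z`, extended linearly in the left argument.
(Since `wmix η z` vanishes on words shorter than `η`, the sum may be truncated.) -/
def mixcomp (c : Series) (z : Series × Series) : Series := fun w =>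
  ∑ n ∈ Finset.range (w.length + 1), ∑ f : Fin n → Bool,
    c (List.ofFn f) * wmix (List.ofFn f) z w

/-- Composition product of a word with a series:
∅ ∘ d = ∅, (x₀η) ∘ d = x₀(η ∘ d), (x₁η) ∘ d = x₀(d ⧢ (η ∘ d)). -/
def wcomp : Word → Series → Series
  | [], _ => oneS
  | false :: η, d => X0f (wcomp η d)
  | true :: η, d => X0f (shuffle d (wcomp η d))

/-- Composition product `c ∘ d`, extended linearly in the left argument. -/
def compP (c d : Series) : Series := fun w =>
  ∑ n ∈ Finset.range (w.length + 1), ∑ f : Fin n → Bool,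
    c (List.ofFn f) * wcomp (List.ofFn f) d w

/-- The group product on G: (c₁,c₂)·(d₁,d₂) = (c₁ ⧢ d₁, c₂ + c₁ ⧢ d₂). -/
def gmul (c d : Series × Series) : Series × Series :=
  (shuffle c.1 d.1, c.2 + shuffle c.1 d.2)

/-- The identity element e = (1∅, 0) of G. -/
def geId : Series × Series := (oneS, 0)

/-- Shuffle powers. -/
def shPow (c : Series) : ℕ → Series
  | 0 => oneS
  | n + 1 => shuffle c (shPow c n)

/-- Shuffle inverse of a series with constant coefficient 1, via the
geometric series c^{⧢ -1} = Σ_k (1∅ - c)^{⧢ k} (truncated by word length,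
which is exact since 1∅ - c is proper). -/
def shInv (c : Series) : Series := fun w =>
  ∑ k ∈ Finset.range (w.length + 1), shPow (oneS - c) k w

/-- The group inverse in (G,·). -/
def ginv (c : Series × Series) : Series × Series :=
  (shInv c.1, -(shuffle (shInv c.1) c.2))

/-- The product ◁ on G, componentwise mixed composition. -/
def triOp (c d : Series × Series) : Series × Series :=
  (mixcomp c.1 d, mixcomp c.2 d)

/-- The Grossman–Larson product c ⋆ d = (c ◁ d) · d. -/
def starOp (c d : Series × Series) : Series × Series := gmul (triOp c d) d

-- Auxiliary lemmas
-- batch 1: basic sh lemmas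
lemma sh_zero_left (w : Word) : ∀ (e : Series), sh w (fun _ => 0) e = 0 := by
  induction w with
  | nil => intro e; simp [sh]
  | cons a w ih => intro e; simp [sh, ih]

lemma sh_zero_right (w : Word) : ∀ (c : Series), sh w c (fun _ => 0) = 0 := by
  induction w with
  | nil => intro c; simp [sh]
  | cons a w ih => intro c; simp [sh, ih]

lemma sh_add_left (w : Word) : ∀ (c c' e : Series),
    sh w (fun u => c u + c' u) e = sh w c e + sh w c' e := by
  induction w with
  | nil => intro c c' e; simp [sh]; ring
  | cons a w ih => intro c c' e; simp only [sh, ih]; ring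

lemma sh_add_right (w : Word) : ∀ (c e e' : Series),
    sh w c (fun u => e u + e' u) = sh w c e + sh w c e' := by
  induction w with
  | nil => intro c e e'; simp [sh]; ring
  | cons a w ih => intro c e e'; simp only [sh, ih]; ring

lemma sh_smul_left (w : Word) : ∀ (r : ℝ) (c e : Series),
    sh w (fun u => r * c u) e = r * sh w c e := by
  induction w with
  | nil => intro r c e; simp [sh]; ring
  | cons a w ih => intro r c e; simp only [sh, ih]; ring

lemma sh_smul_right (w : Word) : ∀ (r : ℝ) (c e : Series),
    sh w c (fun u => r * e u) = r * sh w c e := by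
  induction w with
  | nil => intro r c e; simp [sh]; ring
  | cons a w ih => intro r c e; simp only [sh, ih]; ring

lemma sh_congr (w : Word) : ∀ (c c' e e' : Series),
    (∀ u : Word, u.length ≤ w.length → c u = c' u) →
    (∀ u : Word, u.length ≤ w.length → e u = e' u) →
    sh w c e = sh w c' e' := by
  induction w with
  | nil => intro c c' e e' hc he; simp [sh, hc [] (by simp), he [] (by simp)]
  | cons a w ih =>
    intro c c' e e' hc he
    simp only [sh]
    rw [ih _ _ _ _ (fun u hu => hc (a :: u) (by simpa using Nat.succ_le_succ hu))
      (fun u hu => he u (hu.trans (by simp))),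
      ih _ _ _ _ (fun u hu => hc u (hu.trans (by simp)))
      (fun u hu => he (a :: u) (by simpa using Nat.succ_le_succ hu))]

lemma sh_sum_right (w : Word) : ∀ {ι : Type} (t : Finset ι) (c : Series) (F : ι → Series),
    sh w c (fun v => ∑ i ∈ t, F i v) = ∑ i ∈ t, sh w c (F i) := by
  induction w with
  | nil => intro ι t c F; simp [sh, Finset.mul_sum]
  | cons a w ih => intro ι t c F; simp only [sh, ih]; rw [← Finset.sum_add_distrib]

lemma sh_sum_left (w : Word) : ∀ {ι : Type} (t : Finset ι) (e : Series) (F : ι → Series),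
    sh w (fun v => ∑ i ∈ t, F i v) e = ∑ i ∈ t, sh w (F i) e := by
  induction w with
  | nil => intro ι t e F; simp [sh, Finset.sum_mul]
  | cons a w ih => intro ι t e F; simp only [sh, ih]; rw [← Finset.sum_add_distrib]

lemma sh_one_left (w : Word) : ∀ (e : Series), sh w oneS e = e w := by
  induction w with
  | nil => intro e; simp [sh, oneS, deltaW]
  | cons a w ih =>
    intro e
    have h : (fun u => oneS (a :: u)) = (fun _ : Word => (0:ℝ)) := by
      funext u; simp [oneS, deltaW]
    simp only [sh, h, sh_zero_left, ih, zero_add]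

lemma sh_one_right (w : Word) : ∀ (c : Series), sh w c oneS = c w := by
  induction w with
  | nil => intro c; simp [sh, oneS, deltaW]
  | cons a w ih =>
    intro c
    have h : (fun u => oneS (a :: u)) = (fun _ : Word => (0:ℝ)) := by
      funext u; simp [oneS, deltaW]
    simp only [sh, h, sh_zero_right, ih, add_zero]
-- batch 2
lemma sh_vanish (w : Word) : ∀ (c e : Series) (k : ℕ),
    (∀ u : Word, u.length < k → e u = 0) → w.length < k → sh w c e = 0 := by
  induction w with
  | nil => intro c e k he hw; simp [sh, he [] (by simpa using hw)]
  | cons a w ih =>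
    intro c e k he hw
    simp only [sh]
    rw [ih _ _ k he (by simp at hw ⊢; omega),
      ih _ _ (k-1) (fun u hu => he (a :: u) (by simp at hw ⊢; omega)) (by simp at hw ⊢; omega)]
    ring

lemma shuffle_assoc (w : Word) : ∀ (a b c : Series),
    sh w (shuffle a b) c = sh w a (shuffle b c) := by
  induction w with
  | nil => intro a b c; simp [sh, shuffle, mul_assoc]
  | cons x w ih =>
    intro a b c
    have h1 : (fun u => shuffle a b (x :: u))
        = (fun u => shuffle (fun v => a (x :: v)) b u + shuffle a (fun v => b (x :: v)) u) := by
      funext u; simp [shuffle, sh]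
    have h2 : (fun u => shuffle b c (x :: u))
        = (fun u => shuffle (fun v => b (x :: v)) c u + shuffle b (fun v => c (x :: v)) u) := by
      funext u; simp [shuffle, sh]
    simp only [sh, h1, h2, sh_add_left, sh_add_right, ih]
    ring

lemma shuffle_assoc' (a b c : Series) : shuffle (shuffle a b) c = shuffle a (shuffle b c) := by
  funext w; exact shuffle_assoc w a b c

lemma X0f_nil (c : Series) : X0f c [] = 0 := rfl
lemma X1f_nil (c : Series) : X1f c [] = 0 := rfl
lemma X0f_cons_false (c : Series) (w : Word) : X0f c (false :: w) = c w := rfl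
lemma X0f_cons_true (c : Series) (w : Word) : X0f c (true :: w) = 0 := rfl
lemma X1f_cons_false (c : Series) (w : Word) : X1f c (false :: w) = 0 := rfl
lemma X1f_cons_true (c : Series) (w : Word) : X1f c (true :: w) = c w := rfl

lemma wmix_short : ∀ (η : Word) (z : Series × Series) (w : Word),
    w.length < η.length → wmix η z w = 0 := by
  intro η
  induction η with
  | nil => intro z w hw; simp at hw
  | cons a η ih =>
    intro z w hw
    cases a
    · cases w with
      | nil => simp [wmix, X0f_nil]
      | cons x w' =>
        cases x <;>
          simp only [wmix, X0f_cons_false, X0f_cons_true, X0f_nil, shuffle] <;>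
          first
            | rfl
            | exact ih _ _ (by simp at hw ⊢; omega)
            | exact sh_vanish w' _ _ η.length (fun u hu => ih z u hu) (by simp at hw ⊢; omega)
    · cases w with
      | nil => simp [wmix, Pi.add_apply, X0f_nil, X1f_nil]
      | cons x w' =>
        cases x <;>
          simp only [wmix, Pi.add_apply, X0f_cons_false, X0f_cons_true, X1f_cons_false,
            X1f_cons_true, X0f_nil, X1f_nil, add_zero, zero_add, shuffle] <;>
          exact sh_vanish w' _ _ η.length (fun u hu => ih z u hu) (by simp at hw ⊢; omega)

lemma wcomp_short : ∀ (η : Word) (c : Series) (w : Word),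
    w.length < η.length → wcomp η c w = 0 := by
  intro η
  induction η with
  | nil => intro c w hw; simp at hw
  | cons a η ih =>
    intro c w hw
    cases a <;>
    · cases w with
      | nil => simp [wcomp, X0f_nil]
      | cons x w' =>
        cases x <;>
          simp only [wcomp, X0f_cons_false, X0f_cons_true, shuffle] <;>
          first
            | rfl
            | exact ih _ _ (by simp at hw ⊢; omega)
            | exact sh_vanish w' _ _ η.length (fun u hu => ih c u hu) (by simp at hw ⊢; omega)
-- batch 3 : mySum machinery
def mySum (N : ℕ) (F : Word → ℝ) : ℝ :=
  ∑ n ∈ Finset.range (N+1), ∑ f : Fin n → Bool, F (List.ofFn f)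

lemma mixcomp_eq_mySum (c : Series) (d : Series × Series) (w : Word) :
    mixcomp c d w = mySum w.length (fun u => c u * wmix u d w) := rfl

lemma compP_eq_mySum (c d : Series) (w : Word) :
    compP c d w = mySum w.length (fun u => c u * wcomp u d w) := rfl

lemma sum_fin_zero (F : Word → ℝ) : (∑ f : Fin 0 → Bool, F (List.ofFn f)) = F [] := by
  simp

lemma sum_fin_succ (n : ℕ) (F : Word → ℝ) :
    (∑ f : Fin (n+1) → Bool, F (List.ofFn f))
      = (∑ f : Fin n → Bool, F (false :: List.ofFn f))
        + (∑ f : Fin n → Bool, F (true :: List.ofFn f)) := by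
  rw [← (Fin.consEquiv (fun _ : Fin (n+1) => Bool)).sum_comp (fun f => F (List.ofFn f))]
  rw [Fintype.sum_prod_type]
  have h : ∀ (a : Bool) (g : Fin n → Bool),
      List.ofFn ((Fin.consEquiv (fun _ : Fin (n+1) => Bool)) (a, g)) = a :: List.ofFn g := by
    intro a g
    simp [Fin.consEquiv, List.ofFn_succ]
  simp only [h]
  rw [Fintype.sum_bool]
  ring

lemma mySum_zero (F : Word → ℝ) : mySum 0 F = F [] := by
  simp [mySum]

lemma mySum_succ (N : ℕ) (F : Word → ℝ) :
    mySum (N+1) F = F [] + mySum N (fun u => F (false :: u)) + mySum N (fun u => F (true :: u)) := by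
  unfold mySum
  rw [Finset.sum_range_succ' (fun n => ∑ f : Fin n → Bool, F (List.ofFn f)) (N+1)]
  simp only [sum_fin_succ, sum_fin_zero]
  rw [Finset.sum_add_distrib]
  ring

lemma mySum_congr_le (N : ℕ) {F G : Word → ℝ} (h : ∀ u : Word, u.length ≤ N → F u = G u) :
    mySum N F = mySum N G := by
  unfold mySum
  refine Finset.sum_congr rfl fun n hn => Finset.sum_congr rfl fun f _ => ?_
  exact h _ (by simpa using Nat.lt_succ_iff.mp (Finset.mem_range.mp hn))

lemma mySum_add (N : ℕ) (F G : Word → ℝ) :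
    mySum N (fun u => F u + G u) = mySum N F + mySum N G := by
  unfold mySum; rw [← Finset.sum_add_distrib]
  exact Finset.sum_congr rfl fun n _ => by rw [← Finset.sum_add_distrib]

lemma mySum_zero_fun (N : ℕ) : mySum N (fun _ => (0:ℝ)) = 0 := by
  simp [mySum]

lemma mySum_mul_left (N : ℕ) (r : ℝ) (F : Word → ℝ) :
    mySum N (fun u => r * F u) = r * mySum N F := by
  unfold mySum; rw [Finset.mul_sum]
  exact Finset.sum_congr rfl fun n _ => by rw [Finset.mul_sum]

lemma mySum_mul_right (N : ℕ) (r : ℝ) (F : Word → ℝ) :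
    mySum N (fun u => F u * r) = mySum N F * r := by
  unfold mySum; rw [Finset.sum_mul]
  exact Finset.sum_congr rfl fun n _ => by rw [Finset.sum_mul]

lemma mySum_sum {ι : Type} (N : ℕ) (t : Finset ι) (F : ι → Word → ℝ) :
    mySum N (fun u => ∑ i ∈ t, F i u) = ∑ i ∈ t, mySum N (F i) := by
  unfold mySum
  rw [Finset.sum_comm]
  refine Finset.sum_congr rfl fun n _ => Finset.sum_comm

lemma mySum_comm (N M : ℕ) (F : Word → Word → ℝ) :
    mySum N (fun u => mySum M (fun v => F u v)) = mySum M (fun v => mySum N (fun u => F u v)) := by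
  unfold mySum
  beta_reduce
  calc ∑ n ∈ Finset.range (N + 1), ∑ f : Fin n → Bool, ∑ m ∈ Finset.range (M + 1),
          ∑ g : Fin m → Bool, F (List.ofFn f) (List.ofFn g)
      = ∑ n ∈ Finset.range (N + 1), ∑ m ∈ Finset.range (M + 1), ∑ f : Fin n → Bool,
          ∑ g : Fin m → Bool, F (List.ofFn f) (List.ofFn g) :=
        Finset.sum_congr rfl fun n _ => Finset.sum_comm
    _ = ∑ m ∈ Finset.range (M + 1), ∑ n ∈ Finset.range (N + 1), ∑ f : Fin n → Bool,
          ∑ g : Fin m → Bool, F (List.ofFn f) (List.ofFn g) := Finset.sum_comm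
    _ = ∑ m ∈ Finset.range (M + 1), ∑ n ∈ Finset.range (N + 1), ∑ g : Fin m → Bool,
          ∑ f : Fin n → Bool, F (List.ofFn f) (List.ofFn g) :=
        Finset.sum_congr rfl fun m _ => Finset.sum_congr rfl fun n _ => Finset.sum_comm
    _ = ∑ m ∈ Finset.range (M + 1), ∑ g : Fin m → Bool, ∑ n ∈ Finset.range (N + 1),
          ∑ f : Fin n → Bool, F (List.ofFn f) (List.ofFn g) :=
        Finset.sum_congr rfl fun m _ => Finset.sum_comm

lemma sh_mySum_right (w : Word) (c : Series) (N : ℕ) (F : Word → Series) :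
    sh w c (fun x => mySum N (fun v => F v x)) = mySum N (fun v => sh w c (F v)) := by
  unfold mySum
  rw [sh_sum_right]
  exact Finset.sum_congr rfl fun n _ => by rw [sh_sum_right]

lemma sh_mySum_left (w : Word) (e : Series) (N : ℕ) (F : Word → Series) :
    sh w (fun x => mySum N (fun v => F v x)) e = mySum N (fun v => sh w (F v) e) := by
  unfold mySum
  rw [sh_sum_left]
  exact Finset.sum_congr rfl fun n _ => by rw [sh_sum_left]
-- batch 4
lemma deltaW_sum : ∀ (N : ℕ) (η : Word) (G : Word → ℝ),
    mySum N (fun u => deltaW η u * G u) = if η.length ≤ N then G η else 0 := by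
  intro N
  induction N with
  | zero =>
    intro η G
    rw [mySum_zero]
    cases η with
    | nil => simp [deltaW]
    | cons a η' => simp [deltaW]
  | succ N ih =>
    intro η G
    rw [mySum_succ]
    cases η with
    | nil =>
      have h0 : ∀ b : Bool, (fun u => deltaW ([] : Word) (b :: u) * G (b :: u)) = fun _ => (0:ℝ) := by
        intro b; funext u; simp [deltaW]
      simp [deltaW, h0, mySum_zero_fun]
    | cons a η' =>
      have hne : deltaW (a :: η') [] * G [] = 0 := by simp [deltaW]
      have hb : ∀ b : Bool, (fun u => deltaW (a :: η') (b :: u) * G (b :: u))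
          = fun u => if b = a then deltaW η' u * G (b :: u) else 0 := by
        intro b; funext u
        by_cases hba : b = a <;> by_cases hu : u = η' <;> simp [deltaW, hba, hu]
      rw [hne, hb, hb]
      cases a <;> simp [mySum_zero_fun, ih, Nat.succ_le_succ_iff]

lemma mixcomp_deltaW (η : Word) (d : Series × Series) :
    mixcomp (deltaW η) d = wmix η d := by
  funext w
  rw [mixcomp_eq_mySum, deltaW_sum]
  by_cases h : η.length ≤ w.length
  · rw [if_pos h]
  · rw [if_neg h, wmix_short η d w (by omega)]

lemma mixcomp_extend (b : Series) (d : Series × Series) (v : Word) (N : ℕ) (h : v.length ≤ N) :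
    mixcomp b d v = mySum N (fun u => b u * wmix u d v) := by
  unfold mixcomp mySum
  refine Finset.sum_subset (by intro n hn; simp at hn ⊢; omega) ?_
  intro n hn hn2
  simp only [Finset.mem_range] at hn hn2
  refine Finset.sum_eq_zero fun f _ => ?_
  rw [wmix_short _ _ _ (by simp; omega), mul_zero]

lemma compP_extend (e c : Series) (v : Word) (N : ℕ) (h : v.length ≤ N) :
    compP e c v = mySum N (fun u => e u * wcomp u c v) := by
  unfold compP mySum
  refine Finset.sum_subset (by intro n hn; simp at hn ⊢; omega) ?_
  intro n hn hn2
  simp only [Finset.mem_range] at hn hn2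
  refine Finset.sum_eq_zero fun f _ => ?_
  rw [wcomp_short _ _ _ (by simp; omega), mul_zero]

lemma sh_mixcomp (w : Word) (c b : Series) (d : Series × Series) :
    sh w c (mixcomp b d) = mySum w.length (fun u => b u * sh w c (wmix u d)) := by
  have h1 : sh w c (mixcomp b d)
      = sh w c (fun v => mySum w.length (fun u => b u * wmix u d v)) :=
    sh_congr w _ _ _ _ (fun u _ => rfl) (fun v hv => mixcomp_extend b d v w.length hv)
  rw [h1, sh_mySum_right]
  exact mySum_congr_le _ fun u _ => by rw [← sh_smul_right]
-- batch 5
lemma mixcomp_X0f (b : Series) (d : Series × Series) :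
    mixcomp (X0f b) d = X0f (mixcomp b d) := by
  funext w
  cases w with
  | nil =>
    rw [mixcomp_eq_mySum]
    show mySum 0 _ = X0f (mixcomp b d) []
    rw [mySum_zero, X0f_nil, X0f_nil, zero_mul]
  | cons x w' =>
    rw [mixcomp_eq_mySum]
    show mySum (w'.length + 1) _ = _
    rw [mySum_succ]
    have e0 : X0f b [] * wmix [] d (x :: w') = 0 := by rw [X0f_nil, zero_mul]
    have e2 : mySum w'.length (fun u => X0f b (true :: u) * wmix (true :: u) d (x :: w')) = 0 :=
      Eq.trans (mySum_congr_le _ fun u _ => by rw [X0f_cons_true, zero_mul]) (mySum_zero_fun _)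
    cases x
    · have e1 : mySum w'.length
          (fun u => X0f b (false :: u) * wmix (false :: u) d (false :: w')) = mixcomp b d w' :=
        Eq.trans (mySum_congr_le _ fun u _ => rfl) (mixcomp_eq_mySum b d w').symm
      rw [e0, e1, e2, zero_add, add_zero]
      rfl
    · have e1 : mySum w'.length
          (fun u => X0f b (false :: u) * wmix (false :: u) d (true :: w')) = 0 :=
        Eq.trans (mySum_congr_le _ fun u _ => by
          rw [show wmix (false :: u) d (true :: w') = 0 from rfl, mul_zero]) (mySum_zero_fun _)
      rw [e0, e1, e2, zero_add, add_zero]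
      rfl

lemma mixcomp_X1f (b : Series) (d : Series × Series) :
    mixcomp (X1f b) d
      = fun w => X1f (shuffle d.1 (mixcomp b d)) w + X0f (shuffle d.2 (mixcomp b d)) w := by
  funext w
  cases w with
  | nil =>
    rw [mixcomp_eq_mySum]
    show mySum 0 _ = _
    rw [mySum_zero, X1f_nil, zero_mul, X1f_nil, X0f_nil, add_zero]
  | cons x w' =>
    rw [mixcomp_eq_mySum]
    show mySum (w'.length + 1) _ = _
    rw [mySum_succ]
    have e0 : X1f b [] * wmix [] d (x :: w') = 0 := by rw [X1f_nil, zero_mul]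
    have e1 : mySum w'.length (fun u => X1f b (false :: u) * wmix (false :: u) d (x :: w')) = 0 :=
      Eq.trans (mySum_congr_le _ fun u _ => by rw [X1f_cons_false, zero_mul]) (mySum_zero_fun _)
    cases x
    · have hT : ∀ u : Word, wmix (true :: u) d (false :: w') = sh w' d.2 (wmix u d) := by
        intro u
        show (X1f (shuffle d.1 (wmix u d)) + X0f (shuffle d.2 (wmix u d))) (false :: w') = _
        rw [Pi.add_apply, X1f_cons_false, X0f_cons_false, zero_add]; rfl
      have e2 : mySum w'.length
          (fun u => X1f b (true :: u) * wmix (true :: u) d (false :: w'))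
            = sh w' d.2 (mixcomp b d) := by
        rw [sh_mixcomp]
        exact mySum_congr_le _ fun u _ => by rw [X1f_cons_true, hT]
      rw [e0, e1, e2, zero_add, zero_add, X1f_cons_false, X0f_cons_false, zero_add]
      rfl
    · have hT : ∀ u : Word, wmix (true :: u) d (true :: w') = sh w' d.1 (wmix u d) := by
        intro u
        show (X1f (shuffle d.1 (wmix u d)) + X0f (shuffle d.2 (wmix u d))) (true :: w') = _
        rw [Pi.add_apply, X1f_cons_true, X0f_cons_true, add_zero]; rfl
      have e2 : mySum w'.length
          (fun u => X1f b (true :: u) * wmix (true :: u) d (true :: w'))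
            = sh w' d.1 (mixcomp b d) := by
        rw [sh_mixcomp]
        exact mySum_congr_le _ fun u _ => by rw [X1f_cons_true, hT]
      rw [e0, e1, e2, zero_add, zero_add, X1f_cons_true, X0f_cons_true, add_zero]
      rfl
-- batch 6
lemma shuffle_comm_sh (w : Word) : ∀ (c e : Series), sh w c e = sh w e c := by
  induction w with
  | nil => intro c e; simp [sh, mul_comm]
  | cons a w ih => intro c e; simp only [sh, ih]; ring

lemma shuffle_comm' (c e : Series) : shuffle c e = shuffle e c :=
  funext fun w => shuffle_comm_sh w c e

lemma shuffle_add_left (S T B : Series) : shuffle (S + T) B = shuffle S B + shuffle T B := by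
  funext w
  show sh w (fun u => S u + T u) B = sh w S B + sh w T B
  rw [sh_add_left]

lemma shuffle_add_right (S T B : Series) : shuffle B (S + T) = shuffle B S + shuffle B T := by
  funext w
  show sh w B (fun u => S u + T u) = sh w B S + sh w B T
  rw [sh_add_right]

lemma shuffle_left_comm (A B C : Series) :
    shuffle A (shuffle B C) = shuffle B (shuffle A C) := by
  rw [← shuffle_assoc', shuffle_comm' A B, shuffle_assoc']

lemma X0f_add (S T : Series) : X0f (S + T) = X0f S + X0f T := by
  funext w
  cases w with
  | nil => simp [X0f_nil]
  | cons x w' => cases x <;> simp [X0f_cons_false, X0f_cons_true, Pi.add_apply]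

lemma X1f_add (S T : Series) : X1f (S + T) = X1f S + X1f T := by
  funext w
  cases w with
  | nil => simp [X1f_nil]
  | cons x w' => cases x <;> simp [X1f_cons_false, X1f_cons_true, Pi.add_apply]

def XL : Bool → Series → Series
  | false => X0f
  | true => X1f

lemma XL_nil (a : Bool) (c : Series) : XL a c [] = 0 := by cases a <;> rfl

lemma XL_cons (a x : Bool) (c : Series) (u : Word) :
    XL a c (x :: u) = if x = a then c u else 0 := by
  cases a <;> cases x <;> rfl

lemma shuffle_XL (a b : Bool) (c e : Series) :
    shuffle (XL a c) (XL b e) = XL a (shuffle c (XL b e)) + XL b (shuffle (XL a c) e) := by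
  funext w
  cases w with
  | nil =>
    rw [Pi.add_apply, XL_nil, XL_nil]
    show XL a c [] * XL b e [] = 0 + 0
    rw [XL_nil, zero_mul, add_zero]
  | cons x w' =>
    rw [Pi.add_apply, XL_cons, XL_cons]
    show sh w' (fun u => XL a c (x :: u)) (XL b e) + sh w' (XL a c) (fun u => XL b e (x :: u)) = _
    have h1 : (fun u => XL a c (x :: u)) = (fun u => if x = a then c u else (0:ℝ)) :=
      funext fun u => XL_cons a x c u
    have h2 : (fun u => XL b e (x :: u)) = (fun u => if x = b then e u else (0:ℝ)) :=
      funext fun u => XL_cons b x e u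
    rw [h1, h2]
    cases a <;> cases b <;> cases x <;>
      simp [sh_zero_left, sh_zero_right, shuffle]

lemma shuffle_X00 (c e : Series) :
    shuffle (X0f c) (X0f e) = X0f (shuffle c (X0f e)) + X0f (shuffle (X0f c) e) :=
  shuffle_XL false false c e

lemma shuffle_X01 (c e : Series) :
    shuffle (X0f c) (X1f e) = X0f (shuffle c (X1f e)) + X1f (shuffle (X0f c) e) :=
  shuffle_XL false true c e

lemma shuffle_X10 (c e : Series) :
    shuffle (X1f c) (X0f e) = X1f (shuffle c (X0f e)) + X0f (shuffle (X1f c) e) :=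
  shuffle_XL true false c e

lemma shuffle_X11 (c e : Series) :
    shuffle (X1f c) (X1f e) = X1f (shuffle c (X1f e)) + X1f (shuffle (X1f c) e) :=
  shuffle_XL true true c e

def mstep (d : Series × Series) : Bool → Series → Series
  | false, S => X0f S
  | true, S => X1f (shuffle d.1 S) + X0f (shuffle d.2 S)

lemma wmix_cons (a : Bool) (η : Word) (d : Series × Series) :
    wmix (a :: η) d = mstep d a (wmix η d) := by cases a <;> rfl

lemma mixcomp_add (S T : Series) (d : Series × Series) :
    mixcomp (S + T) d = mixcomp S d + mixcomp T d := by
  funext w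
  rw [Pi.add_apply, mixcomp_eq_mySum, mixcomp_eq_mySum, mixcomp_eq_mySum, ← mySum_add]
  exact mySum_congr_le _ fun u _ => by rw [Pi.add_apply, add_mul]

lemma mixcomp_XL (a : Bool) (S : Series) (d : Series × Series) :
    mixcomp (XL a S) d = mstep d a (mixcomp S d) := by
  cases a
  · exact mixcomp_X0f S d
  · exact mixcomp_X1f S d

lemma deltaW_cons (a : Bool) (η : Word) : deltaW (a :: η) = XL a (deltaW η) := by
  funext w
  cases w with
  | nil => simp [deltaW, XL_nil]
  | cons x w' =>
    rw [XL_cons]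
    by_cases hx : x = a <;> by_cases hw : w' = η <;> simp [deltaW, hx, hw]

lemma mstep_shuffle (d : Series × Series) (a b : Bool) (A B : Series) :
    mstep d a (shuffle A (mstep d b B)) + mstep d b (shuffle (mstep d a A) B)
      = shuffle (mstep d a A) (mstep d b B) := by
  cases a <;> cases b <;>
    simp only [mstep] <;>
    simp only [shuffle_add_left, shuffle_add_right, X0f_add, X1f_add,
      shuffle_X00, shuffle_X01, shuffle_X10, shuffle_X11] <;>
    simp only [shuffle_assoc', shuffle_comm', shuffle_left_comm, shuffle_add_left,
      shuffle_add_right, X0f_add, X1f_add] <;>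
    abel

lemma key (d : Series × Series) (ξ : Word) : ∀ η : Word,
    mixcomp (shuffle (deltaW ξ) (deltaW η)) d = shuffle (wmix ξ d) (wmix η d) := by
  induction ξ with
  | nil =>
    intro η
    have h1 : shuffle (deltaW []) (deltaW η) = deltaW η := funext fun w => sh_one_left w _
    rw [h1, mixcomp_deltaW]
    exact (funext fun w => sh_one_left w (wmix η d)).symm
  | cons a ξ' ihξ =>
    intro η
    induction η with
    | nil =>
      have h1 : shuffle (deltaW (a :: ξ')) (deltaW []) = deltaW (a :: ξ') :=
        funext fun w => sh_one_right w _
      rw [h1, mixcomp_deltaW]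
      exact (funext fun w => sh_one_right w (wmix (a :: ξ') d)).symm
    | cons b η' ihη =>
      rw [deltaW_cons a ξ', deltaW_cons b η', shuffle_XL, ← deltaW_cons a ξ', ← deltaW_cons b η',
        mixcomp_add, mixcomp_XL, mixcomp_XL, ihξ (b :: η'), ihη,
        wmix_cons a ξ' d, wmix_cons b η' d, mstep_shuffle]
-- batch 7
lemma expand_eq (N : ℕ) (a : Series) (u : Word) (hu : u.length ≤ N) :
    mySum N (fun v => a v * deltaW v u) = a u := by
  have h : ∀ v : Word, a v * deltaW v u = deltaW u v * a v := by
    intro v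
    by_cases h : u = v
    · subst h; simp [deltaW]
    · simp [deltaW, h, Ne.symm h]
  rw [mySum_congr_le N (fun v _ => h v), deltaW_sum, if_pos hu]

lemma mySum_rearrange (N : ℕ) (α β : Word → ℝ) (K : Word → Word → Word → ℝ) :
    mySum N (fun u => mySum N (fun v => α v * mySum N (fun v' => β v' * K u v v')))
      = mySum N (fun v => α v * mySum N (fun v' => β v' * mySum N (fun u => K u v v'))) := by
  rw [mySum_comm]
  refine mySum_congr_le _ fun v _ => ?_
  rw [mySum_mul_left]
  congr 1
  rw [mySum_comm]
  refine mySum_congr_le _ fun v' _ => ?_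
  rw [mySum_mul_left]

lemma mixcomp_shuffle (a b : Series) (d : Series × Series) :
    mixcomp (shuffle a b) d = shuffle (mixcomp a d) (mixcomp b d) := by
  funext w
  set N := w.length with hN
  have hR : shuffle (mixcomp a d) (mixcomp b d) w
      = mySum N (fun v => a v * mySum N (fun v' => b v' * sh w (wmix v d) (wmix v' d))) := by
    show sh w (mixcomp a d) (mixcomp b d) = _
    have h1 : sh w (mixcomp a d) (mixcomp b d)
        = sh w (fun x => mySum N (fun v => a v * wmix v d x)) (mixcomp b d) :=
      sh_congr w _ _ _ _ (fun x hx => mixcomp_extend a d x N hx) (fun _ _ => rfl)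
    rw [h1, sh_mySum_left]
    refine mySum_congr_le _ fun v _ => ?_
    rw [sh_smul_left, sh_mixcomp, ← hN]
  have h2 : ∀ u : Word, u.length ≤ N → shuffle a b u * wmix u d w
      = mySum N (fun v => a v * mySum N (fun v' => b v' *
          (sh u (deltaW v) (deltaW v') * wmix u d w))) := by
    intro u hu
    have ha : sh u a b = sh u (fun x => mySum N (fun v => a v * deltaW v x))
        (fun x => mySum N (fun v => b v * deltaW v x)) :=
      sh_congr u _ _ _ _ (fun x hx => (expand_eq N a x (le_trans hx hu)).symm)
        (fun x hx => (expand_eq N b x (le_trans hx hu)).symm)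
    show sh u a b * wmix u d w = _
    rw [ha, sh_mySum_left, ← mySum_mul_right]
    refine mySum_congr_le _ fun v _ => ?_
    rw [sh_smul_left, sh_mySum_right, mul_assoc, ← mySum_mul_right]
    congr 1
    refine mySum_congr_le _ fun v' _ => ?_
    rw [sh_smul_right, mul_assoc]
  have hL : mixcomp (shuffle a b) d w
      = mySum N (fun v => a v * mySum N (fun v' => b v' * sh w (wmix v d) (wmix v' d))) := by
    rw [mixcomp_eq_mySum, mySum_congr_le N h2, mySum_rearrange]
    refine mySum_congr_le _ fun v _ => ?_
    congr 1
    refine mySum_congr_le _ fun v' _ => ?_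
    congr 1
    exact Eq.trans (mixcomp_eq_mySum (shuffle (deltaW v) (deltaW v')) d w).symm
      (congrFun (key d v v') w)
  rw [hL, hR]

lemma wcomp_mixcomp (η : Word) (c : Series) (d : Series × Series) :
    wcomp η (mixcomp c d) = mixcomp (wcomp η c) d := by
  induction η with
  | nil => exact (mixcomp_deltaW [] d).symm
  | cons a η ih =>
    cases a
    · show X0f (wcomp η (mixcomp c d)) = mixcomp (X0f (wcomp η c)) d
      rw [ih, mixcomp_X0f]
    · show X0f (shuffle (mixcomp c d) (wcomp η (mixcomp c d)))
        = mixcomp (X0f (shuffle c (wcomp η c))) d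
      rw [ih, ← mixcomp_shuffle, mixcomp_X0f]

theorem comp_mixcomp_assoc' (e c : Series) (d : Series × Series) :
    compP e (mixcomp c d) = mixcomp (compP e c) d := by
  funext w
  set N := w.length with hN
  have hL : compP e (mixcomp c d) w = mySum N (fun v => e v * mixcomp (wcomp v c) d w) := by
    rw [compP_eq_mySum]
    exact mySum_congr_le _ fun v _ => by rw [wcomp_mixcomp]
  have h1 : ∀ u : Word, u.length ≤ N → compP e c u * wmix u d w
      = mySum N (fun v => e v * (wcomp v c u * wmix u d w)) := by
    intro u hu
    rw [compP_extend e c u N hu, ← mySum_mul_right]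
    exact mySum_congr_le _ fun v _ => by rw [mul_assoc]
  have hR : mixcomp (compP e c) d w = mySum N (fun v => e v * mixcomp (wcomp v c) d w) := by
    rw [mixcomp_eq_mySum, mySum_congr_le N h1, mySum_comm]
    refine mySum_congr_le _ fun v _ => ?_
    rw [mySum_mul_left, mixcomp_eq_mySum, ← hN]
  rw [hL, hR]


/-- e ∘ (c ∘̃ d) = (e ∘ c) ∘̃ d. -/
theorem comp_mixcomp_assoc (e c : Series) (d : Series × Series) :
    compP e (mixcomp c d) = mixcomp (compP e c) d := by
  exact comp_mixcomp_assoc' e c d
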